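/- Let C be a circle or a line in ℝ², and let p, q ∉ C with p ≠ q. Then the number of pairs (r,s) ∈ C × C such that the perpendicular bisector of p and r equals the perpendicular bisector of q and s is at most 2. -/

import Mathlib

noncomputable section

open scoped RealInnerProductSpace

def bisector (a b : EuclideanSpace ℝ (Fin 2)) : Set (EuclideanSpace ℝ (Fin 2)) :=
  {x | dist x a = dist x b}

/-- `C` is (the point set of) a circle or a line in the plane. -/
def IsCircleOrLine (C : Set (EuclideanSpace ℝ (Fin 2))) : Prop :=
  (∃ o r, 0 < r ∧ C = Metric.sphere o r) ∨
  (∃ (v : EuclideanSpace ℝ (Fin 2)) (t : ℝ), v ≠ 0 ∧ C = {x | (inner ℝ v x : ℝ) = t})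

abbrev E2 := EuclideanSpace ℝ (Fin 2)

def pp (v : E2) : E2 := WithLp.toLp 2 ![-(v 1), v 0]

@[simp] lemma pp0 (v : E2) : pp v 0 = -(v 1) := rfl
@[simp] lemma pp1 (v : E2) : pp v 1 = v 0 := rfl

lemma pp_self (v : E2) : ⟪v, pp v⟫ = 0 := by
  simp [PiLp.inner_apply, Fin.sum_univ_two]; ring

lemma pp_ne (v : E2) (hv : v ≠ 0) : pp v ≠ 0 := by
  intro h
  apply hv
  have h0 := congrFun (congrArg WithLp.ofLp h) 0
  have h1 := congrFun (congrArg WithLp.ofLp h) 1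
  simp at h0 h1
  ext i
  fin_cases i <;> simpa

lemma pp_pp (v : E2) : pp (pp v) = -v := by
  ext i
  fin_cases i <;> simp

lemma perp_span (v z : E2) (hv : v ≠ 0) (h : ⟪v, z⟫ = 0) : ∃ c : ℝ, z = c • pp v := by
  have hN : v 0 ^ 2 + v 1 ^ 2 ≠ 0 := by
    intro hN
    apply hv
    have h0 : v 0 = 0 := by nlinarith [sq_nonneg (v 0), sq_nonneg (v 1)]
    have h1 : v 1 = 0 := by nlinarith [sq_nonneg (v 0), sq_nonneg (v 1)]
    ext i; fin_cases i <;> simpa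
  have hinner : v 0 * z 0 + v 1 * z 1 = 0 := by
    have h' := h; simp [PiLp.inner_apply, Fin.sum_univ_two] at h'; linear_combination h'
  refine ⟨(v 0 * z 1 - v 1 * z 0) / (v 0 ^ 2 + v 1 ^ 2), ?_⟩
  ext i
  fin_cases i
  · show z 0 = _ * pp v 0
    rw [pp0]; field_simp; linear_combination (v 0) * hinner
  · show z 1 = _ * pp v 1
    rw [pp1]; field_simp; linear_combination (v 1) * hinner

/-- Two distinct points on the line `⟪v,·⟫ = t` differ by a multiple of `pp v`. -/
lemma line_diff (v : E2) (hv : v ≠ 0) (t : ℝ) (x y : E2) (hx : ⟪v, x⟫ = t)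
    (hy : ⟪v, y⟫ = t) : ∃ c : ℝ, y = x + c • pp v := by
  obtain ⟨c, hc⟩ := perp_span v (y - x) hv (by rw [inner_sub_right, hx, hy]; ring)
  exact ⟨c, by rw [← hc]; abel⟩

/-- A line and a "quadric with nonzero leading coefficient" meet in at most two points. -/
lemma line_quadric_sub (v : E2) (hv : v ≠ 0) (t : ℝ) (α : ℝ) (hα : α ≠ 0) (z : E2) (c : ℝ) :
    ∃ x y : E2, {x : E2 | ⟪v, x⟫ = t ∧ α * ‖x‖ ^ 2 + ⟪z, x⟫ = c} ⊆ {x, y} := by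
  set S := {x : E2 | ⟪v, x⟫ = t ∧ α * ‖x‖ ^ 2 + ⟪z, x⟫ = c} with hS
  by_cases h2 : ∃ x ∈ S, ∃ y ∈ S, x ≠ y
  · obtain ⟨x, hx, y, hy, hxy⟩ := h2
    refine ⟨x, y, fun s hs => ?_⟩
    by_contra hss
    simp only [Set.mem_insert_iff, Set.mem_singleton_iff, not_or] at hss
    obtain ⟨hsx, hsy⟩ := hss
    obtain ⟨a, ha⟩ := line_diff v hv t x y hx.1 hy.1
    obtain ⟨b, hb⟩ := line_diff v hv t x s hx.1 hs.1
    have hW : (0:ℝ) < ‖pp v‖ ^ 2 := by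
      have := norm_pos_iff.mpr (pp_ne v hv)
      positivity
    have ha0 : a ≠ 0 := by rintro rfl; exact hxy (by simpa using ha.symm)
    have hb0 : b ≠ 0 := by rintro rfl; exact hsx (by simpa using hb)
    have hab : a ≠ b := by rintro rfl; exact hsy (hb.trans ha.symm)
    -- expand the quadric conditions
    have key : ∀ u : ℝ, α * ‖x + u • pp v‖ ^ 2 + ⟪z, x + u • pp v⟫ =
        α * ‖x‖ ^ 2 + ⟪z, x⟫ + u * (2 * α * ⟪x, pp v⟫ + ⟪z, pp v⟫) + u ^ 2 * (α * ‖pp v‖ ^ 2) := by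
      intro u
      rw [norm_add_sq_real, inner_add_right, real_inner_smul_right, norm_smul]
      simp [mul_pow, real_inner_smul_right]
      ring
    have e1 : α * ‖x‖ ^ 2 + ⟪z, x⟫ = c := hx.2
    have e2 := hy.2
    have e3 := hs.2
    rw [ha, key] at e2
    rw [hb, key] at e3
    have : a * (2 * α * ⟪x, pp v⟫ + ⟪z, pp v⟫ + a * (α * ‖pp v‖ ^ 2)) = 0 := by
      linear_combination e2 - e1
    have ea : 2 * α * ⟪x, pp v⟫ + ⟪z, pp v⟫ + a * (α * ‖pp v‖ ^ 2) = 0 := by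
      rcases mul_eq_zero.mp this with h | h
      · exact absurd h ha0
      · exact h
    have : b * (2 * α * ⟪x, pp v⟫ + ⟪z, pp v⟫ + b * (α * ‖pp v‖ ^ 2)) = 0 := by
      linear_combination e3 - e1
    have eb : 2 * α * ⟪x, pp v⟫ + ⟪z, pp v⟫ + b * (α * ‖pp v‖ ^ 2) = 0 := by
      rcases mul_eq_zero.mp this with h | h
      · exact absurd h hb0
      · exact h
    have : (a - b) * (α * ‖pp v‖ ^ 2) = 0 := by linear_combination ea - eb
    rcases mul_eq_zero.mp this with h | h
    · exact hab (by linarith)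
    · exact hα (by nlinarith)
  · push_neg at h2
    by_cases hne : S.Nonempty
    · obtain ⟨x, hx⟩ := hne
      exact ⟨x, x, fun s hs => by simp [h2 s hs x hx]⟩
    · exact ⟨0, 0, fun s hs => absurd ⟨s, hs⟩ hne⟩

/-- Two lines, the second of which has a point off the first, meet in at most one point. -/
lemma line_line_sub (v z : E2) (hv : v ≠ 0) (hz : z ≠ 0) (t c : ℝ) (y₀ : E2)
    (hy₀ : ⟪z, y₀⟫ = c) (hy₀' : ⟪v, y₀⟫ ≠ t) :
    ∃ x : E2, {x : E2 | ⟪v, x⟫ = t ∧ ⟪z, x⟫ = c} ⊆ {x} := by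
  set S := {x : E2 | ⟪v, x⟫ = t ∧ ⟪z, x⟫ = c} with hS
  have hsub : ∀ x ∈ S, ∀ y ∈ S, x = y := by
    intro x hx y hy
    by_contra hxy
    obtain ⟨a, ha⟩ := line_diff v hv t x y hx.1 hy.1
    have ha0 : a ≠ 0 := by rintro rfl; exact hxy (by simpa using ha.symm)
    have hzw : ⟪z, pp v⟫ = 0 := by
      have : ⟪z, y⟫ - ⟪z, x⟫ = 0 := by rw [hx.2, hy.2]; ring
      rw [ha] at this
      simp only [inner_add_right, real_inner_smul_right] at this
      have : a * ⟪z, pp v⟫ = 0 := by linarith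
      rcases mul_eq_zero.mp this with h | h
      · exact absurd h ha0
      · exact h
    obtain ⟨k, hk⟩ := perp_span (pp v) z (pp_ne v hv) (by rwa [real_inner_comm])
    rw [pp_pp] at hk
    have hk0 : k ≠ 0 := by rintro rfl; apply hz; simpa using hk
    have h1 : ⟪z, x⟫ = -k * ⟪v, x⟫ := by rw [hk]; simp [real_inner_smul_left, inner_neg_left]
    have h2 : ⟪z, y₀⟫ = -k * ⟪v, y₀⟫ := by rw [hk]; simp [real_inner_smul_left, inner_neg_left]
    apply hy₀'
    have hc1 : c = -k * t := by rw [← hx.2, h1, hx.1]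
    have hc2 : c = -k * ⟪v, y₀⟫ := by rw [← hy₀, h2]
    have : -k * t = -k * ⟪v, y₀⟫ := hc1 ▸ hc2
    exact (mul_left_cancel₀ (neg_ne_zero.mpr hk0) this).symm
  by_cases hne : S.Nonempty
  · obtain ⟨x, hx⟩ := hne
    exact ⟨x, fun s hs => by simp [hsub s hs x hx]⟩
  · exact ⟨0, fun s hs => absurd ⟨s, hs⟩ hne⟩
lemma norm_sq_eq (x : E2) : ‖x‖ ^ 2 = x 0 ^ 2 + x 1 ^ 2 := by
  rw [← real_inner_self_eq_norm_sq]
  simp only [PiLp.inner_apply, Fin.sum_univ_two, RCLike.inner_apply, conj_trivial]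
  ring

lemma inner_eq (x y : E2) : ⟪x, y⟫ = x 0 * y 0 + x 1 * y 1 := by
  simp [PiLp.inner_apply, Fin.sum_univ_two]; ring

lemma norm_sq_ne (u : E2) (hu : u ≠ 0) : u 0 ^ 2 + u 1 ^ 2 ≠ 0 := by
  intro hN
  apply hu
  have h0 : u 0 = 0 := by nlinarith [sq_nonneg (u 0), sq_nonneg (u 1)]
  have h1 : u 1 = 0 := by nlinarith [sq_nonneg (u 0), sq_nonneg (u 1)]
  ext i; fin_cases i <;> simpa

/-- Reflection across the hyperplane `{x | 2⟪u,x⟫ = δ}`. -/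
def rfp (u : E2) (δ : ℝ) (x : E2) : E2 := x - ((2 * ⟪u, x⟫ - δ) / ‖u‖ ^ 2) • u

lemma sub_ne (a b : E2) (h : b ≠ a) : b - a ≠ 0 := sub_ne_zero.mpr h

/-- the reflection only depends on the hyperplane data up to scaling -/
lemma rfp_scale (u : E2) (δ κ : ℝ) (hu : u ≠ 0) (hκ : κ ≠ 0) (x : E2) :
    rfp (κ • u) (κ * δ) x = rfp u δ x := by
  have hN := norm_sq_ne u hu
  have h2 : (κ * u 0) ^ 2 + (κ * u 1) ^ 2 ≠ 0 := by
    rw [show (κ * u 0) ^ 2 + (κ * u 1) ^ 2 = κ ^ 2 * (u 0 ^ 2 + u 1 ^ 2) from by ring]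
    exact mul_ne_zero (pow_ne_zero 2 hκ) hN
  have h3 : κ ^ 2 * u 0 ^ 2 + κ ^ 2 * u 1 ^ 2 ≠ 0 := by
    rw [show κ ^ 2 * u 0 ^ 2 + κ ^ 2 * u 1 ^ 2 = κ ^ 2 * (u 0 ^ 2 + u 1 ^ 2) from by ring]
    exact mul_ne_zero (pow_ne_zero 2 hκ) hN
  ext i
  fin_cases i <;>
  · simp only [rfp, inner_eq, norm_sq_eq, PiLp.sub_apply, PiLp.smul_apply, smul_eq_mul]
    rw [div_mul_eq_mul_div, div_mul_eq_mul_div]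
    congr 1
    rw [div_eq_div_iff h2 hN]
    ring

lemma rfp_self (a b : E2) (h : b ≠ a) :
    rfp (b - a) (‖b‖ ^ 2 - ‖a‖ ^ 2) a = b := by
  have hN := norm_sq_ne (b - a) (sub_ne a b h)
  simp only [PiLp.sub_apply] at hN
  ext i
  fin_cases i <;>
  · simp only [rfp, inner_eq, norm_sq_eq, PiLp.sub_apply, PiLp.smul_apply, smul_eq_mul]
    field_simp
    ring

lemma rfp_dist (a b x : E2) (h : b ≠ a) :
    ‖rfp (b - a) (‖b‖ ^ 2 - ‖a‖ ^ 2) x - a‖ ^ 2 = ‖x - b‖ ^ 2 := by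
  have hN := norm_sq_ne (b - a) (sub_ne a b h)
  simp only [PiLp.sub_apply] at hN
  simp only [rfp, inner_eq, norm_sq_eq, PiLp.sub_apply, PiLp.smul_apply, smul_eq_mul]
  field_simp
  ring

lemma rfp_delta (u : E2) (δ : ℝ) (hu : u ≠ 0) (o : E2) :
    ‖rfp u δ o‖ ^ 2 - ‖o‖ ^ 2 = -((2 * ⟪u, o⟫ - δ) / ‖u‖ ^ 2) * δ := by
  have hN := norm_sq_ne u hu
  simp only [rfp, inner_eq, norm_sq_eq, PiLp.sub_apply, PiLp.smul_apply, smul_eq_mul]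
  field_simp
  ring

lemma rfp_sub (u : E2) (δ : ℝ) (o : E2) :
    rfp u δ o - o = (-((2 * ⟪u, o⟫ - δ) / ‖u‖ ^ 2)) • u := by
  simp only [rfp]
  ext i
  fin_cases i <;> simp [PiLp.sub_apply, PiLp.smul_apply] <;> ring


lemma bisector_normal (a b : E2) :
    bisector a b = {x : E2 | ⟪b - a, x⟫ = (‖b‖ ^ 2 - ‖a‖ ^ 2) / 2} := by
  ext x
  simp only [bisector, Set.mem_setOf_eq, dist_eq_norm]
  constructor
  · intro h
    have h2 : ‖x - a‖ ^ 2 = ‖x - b‖ ^ 2 := by rw [h]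
    simp only [norm_sq_eq, inner_eq, PiLp.sub_apply] at h2 ⊢
    linear_combination h2 / 2
  · intro h
    have h2 : ‖x - a‖ ^ 2 = ‖x - b‖ ^ 2 := by
      simp only [norm_sq_eq, inner_eq, PiLp.sub_apply] at h ⊢
      linear_combination 2 * h
    exact (sq_eq_sq₀ (norm_nonneg _) (norm_nonneg _)).mp h2

lemma hyperplane_eq (u u' : E2) (c c' : ℝ) (hu : u ≠ 0) (hu' : u' ≠ 0)
    (h : {x : E2 | ⟪u, x⟫ = c} = {x : E2 | ⟪u', x⟫ = c'}) :
    ∃ κ : ℝ, κ ≠ 0 ∧ u' = κ • u ∧ c' = κ * c := by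
  have hN : ⟪u, u⟫ ≠ 0 := inner_self_ne_zero.mpr hu
  set x₀ : E2 := (c / ⟪u, u⟫) • u with hx₀def
  have hx₀ : ⟪u, x₀⟫ = c := by rw [hx₀def, real_inner_smul_right, div_mul_cancel₀ _ hN]
  have hiff := Set.ext_iff.mp h
  have hx₀' : ⟪u', x₀⟫ = c' := (hiff x₀).mp hx₀
  have hw : ⟪u, x₀ + pp u⟫ = c := by simp only [inner_add_right]; rw [pp_self, hx₀, add_zero]
  have hw' : ⟪u', pp u⟫ = 0 := by
    have := (hiff (x₀ + pp u)).mp hw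
    simp only [Set.mem_setOf_eq, inner_add_right] at this
    rw [hx₀'] at this
    linarith
  obtain ⟨k, hk⟩ := perp_span (pp u) u' (pp_ne u hu) (by rwa [real_inner_comm])
  rw [pp_pp] at hk
  refine ⟨-k, ?_, ?_, ?_⟩
  · intro h0
    apply hu'
    rw [hk, show k = 0 from by linarith]
    simp
  · rw [hk, smul_neg, ← neg_smul]
  · have : ⟪u', x₀⟫ = -k * ⟪u, x₀⟫ := by
      rw [hk, real_inner_smul_left, inner_neg_left]; ring
    rw [← hx₀, ← this, hx₀']

lemma bisector_prop (p r q s : E2) (hr : r ≠ p) (hs : s ≠ q) (h : bisector p r = bisector q s) :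
    ∃ κ : ℝ, κ ≠ 0 ∧ s - q = κ • (r - p) ∧ ‖s‖ ^ 2 - ‖q‖ ^ 2 = κ * (‖r‖ ^ 2 - ‖p‖ ^ 2) := by
  rw [bisector_normal, bisector_normal] at h
  obtain ⟨κ, hκ, hv, hc⟩ := hyperplane_eq (r - p) (s - q) ((‖r‖ ^ 2 - ‖p‖ ^ 2) / 2)
    ((‖s‖ ^ 2 - ‖q‖ ^ 2) / 2) (sub_ne p r hr) (sub_ne q s hs) h
  exact ⟨κ, hκ, hv, by linarith⟩

lemma bisector_inj (p r₁ r₂ : E2) (h1 : r₁ ≠ p) (h2 : r₂ ≠ p)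
    (h : bisector p r₁ = bisector p r₂) : r₁ = r₂ := by
  obtain ⟨κ, hκ, hv, hc⟩ := bisector_prop p r₁ p r₂ h1 h2 h
  have e0 : r₂ 0 - p 0 = κ * (r₁ 0 - p 0) := by
    have := congrFun (congrArg WithLp.ofLp hv) 0; simpa [PiLp.sub_apply, PiLp.smul_apply] using this
  have e1 : r₂ 1 - p 1 = κ * (r₁ 1 - p 1) := by
    have := congrFun (congrArg WithLp.ofLp hv) 1; simpa [PiLp.sub_apply, PiLp.smul_apply] using this
  have hU : (r₁ 0 - p 0) ^ 2 + (r₁ 1 - p 1) ^ 2 ≠ 0 := by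
    have := norm_sq_ne (r₁ - p) (sub_ne p r₁ h1)
    simpa [PiLp.sub_apply] using this
  have hc' : r₂ 0 ^ 2 + r₂ 1 ^ 2 - (p 0 ^ 2 + p 1 ^ 2) =
      κ * (r₁ 0 ^ 2 + r₁ 1 ^ 2 - (p 0 ^ 2 + p 1 ^ 2)) := by
    simpa [norm_sq_eq] using hc
  have er0 : r₂ 0 = p 0 + κ * (r₁ 0 - p 0) := by linarith
  have er1 : r₂ 1 = p 1 + κ * (r₁ 1 - p 1) := by linarith
  rw [er0, er1] at hc'
  have hkey : κ * (κ - 1) * ((r₁ 0 - p 0) ^ 2 + (r₁ 1 - p 1) ^ 2) = 0 := by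
    linear_combination hc'
  have hκ1 : κ = 1 := by
    rcases mul_eq_zero.mp hkey with h' | h'
    · rcases mul_eq_zero.mp h' with h'' | h''
      · exact absurd h'' hκ
      · linarith
    · exact absurd h' hU
  ext i
  fin_cases i
  · show r₁ 0 = r₂ 0; rw [hκ1] at e0; linarith
  · show r₁ 1 = r₂ 1; rw [hκ1] at e1; linarith


lemma norm_sq_eq_of_dist (x y : E2) (ρ : ℝ) (hρ : 0 ≤ ρ) (h : dist x y = ρ) :
    ‖x - y‖ ^ 2 = ρ ^ 2 := by
  rw [← dist_eq_norm, h]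

lemma dist_of_norm_sq (x y : E2) (ρ : ℝ) (hρ : 0 ≤ ρ) (h : ‖x - y‖ ^ 2 = ρ ^ 2) :
    dist x y = ρ := by
  rw [dist_eq_norm]
  exact (sq_eq_sq₀ (norm_nonneg _) hρ).mp h

/-- For a circle or line `C` and distinct points `p, q ∉ C`, there are at most two pairs
`(r,s) ∈ C × C` with `B(p,r) = B(q,s)`. -/
theorem shared_bisectors_le_two (C : Set (EuclideanSpace ℝ (Fin 2))) (hC : IsCircleOrLine C)
    (p q : EuclideanSpace ℝ (Fin 2)) (hp : p ∉ C) (hq : q ∉ C) (hpq : p ≠ q) :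
    Set.ncard {rs : EuclideanSpace ℝ (Fin 2) × EuclideanSpace ℝ (Fin 2) |
      rs.1 ∈ C ∧ rs.2 ∈ C ∧ bisector p rs.1 = bisector q rs.2} ≤ 2 := by
  set S := {rs : EuclideanSpace ℝ (Fin 2) × EuclideanSpace ℝ (Fin 2) |
      rs.1 ∈ C ∧ rs.2 ∈ C ∧ bisector p rs.1 = bisector q rs.2} with hSdef
  have hinj : Set.InjOn Prod.snd S := by
    rintro ⟨r₁, s₁⟩ h₁ ⟨r₂, s₂⟩ h₂ hss
    obtain ⟨hr₁C, hs₁C, hb₁⟩ := h₁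
    obtain ⟨hr₂C, hs₂C, hb₂⟩ := h₂
    simp only at hss
    subst hss
    have hr₁p : r₁ ≠ p := fun h => hp (h ▸ hr₁C)
    have hr₂p : r₂ ≠ p := fun h => hp (h ▸ hr₂C)
    have := bisector_inj p r₁ r₂ hr₁p hr₂p (hb₁.trans hb₂.symm)
    simp [Prod.ext_iff, this]
  have hcard : S.ncard = (Prod.snd '' S).ncard := (Set.ncard_image_of_injOn hinj).symm
  suffices h : ∃ x y : E2, Prod.snd '' S ⊆ {x, y} by
    obtain ⟨x, y, hsub⟩ := h
    rw [hcard]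
    calc (Prod.snd '' S).ncard ≤ ({x, y} : Set E2).ncard :=
          Set.ncard_le_ncard hsub ((Set.finite_singleton y).insert x)
      _ ≤ 2 := by
          refine le_trans (Set.ncard_insert_le x {y}) ?_
          simp
  rcases hC with ⟨o, ρ, hρ, hCeq⟩ | ⟨v, t, hv, hCeq⟩
  · -- circle case
    subst hCeq
    have hqp : q - p ≠ 0 := sub_ne p q (Ne.symm hpq)
    obtain ⟨x, y, hT⟩ := line_quadric_sub (q - p) hqp ((‖q‖ ^ 2 - ‖p‖ ^ 2) / 2) 1 one_ne_zero
      ((-2 : ℝ) • p) (ρ ^ 2 - ‖p‖ ^ 2)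
    refine ⟨rfp (x - o) (‖x‖ ^ 2 - ‖o‖ ^ 2) q, rfp (y - o) (‖y‖ ^ 2 - ‖o‖ ^ 2) q, ?_⟩
    rintro s' ⟨⟨r, s⟩, hrs, rfl⟩
    obtain ⟨hrC, hsC, hb⟩ := hrs
    simp only [Metric.mem_sphere] at hrC hsC
    have hrp : r ≠ p := by rintro rfl; exact hp hrC
    have hsq : s ≠ q := by rintro rfl; exact hq hsC
    set u : E2 := r - p with hudef
    set δ : ℝ := ‖r‖ ^ 2 - ‖p‖ ^ 2 with hδdef
    set k : ℝ := (2 * ⟪u, o⟫ - δ) / ‖u‖ ^ 2 with hkdef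
    set o' : E2 := rfp u δ o with ho'def
    have hu0 : u ≠ 0 := sub_ne p r hrp
    have h1 : ‖o' - p‖ ^ 2 = ρ ^ 2 := by
      rw [ho'def, hudef, hδdef, rfp_dist p r o hrp]
      exact norm_sq_eq_of_dist o r ρ hρ.le (by rw [dist_comm]; exact hrC)
    obtain ⟨κ, hκ, hvs, hcs⟩ := bisector_prop p r q s hrp hsq hb
    have ho'2 : rfp (s - q) (‖s‖ ^ 2 - ‖q‖ ^ 2) o = o' := by
      rw [hvs, hcs, ho'def, hudef, hδdef]
      exact rfp_scale (r - p) (‖r‖ ^ 2 - ‖p‖ ^ 2) κ (sub_ne p r hrp) hκ o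
    have h2 : ‖o' - q‖ ^ 2 = ρ ^ 2 := by
      rw [← ho'2, rfp_dist q s o hsq]
      exact norm_sq_eq_of_dist o s ρ hρ.le (by rw [dist_comm]; exact hsC)
    have hk0 : k ≠ 0 := by
      intro hk
      apply hp
      have ho'o : o' = o := by
        rw [ho'def, rfp, ← hkdef, hk]
        simp
      rw [ho'o] at h1
      simp only [Metric.mem_sphere]
      refine dist_of_norm_sq p o ρ hρ.le ?_
      rw [← h1, norm_sub_rev]
    have hmem : o' ∈ {w : E2 | ⟪q - p, w⟫ = (‖q‖ ^ 2 - ‖p‖ ^ 2) / 2 ∧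
        1 * ‖w‖ ^ 2 + ⟪(-2 : ℝ) • p, w⟫ = ρ ^ 2 - ‖p‖ ^ 2} := by
      have e1 : (o' 0 - p 0) ^ 2 + (o' 1 - p 1) ^ 2 = ρ ^ 2 := by
        have := h1; simpa [norm_sq_eq, PiLp.sub_apply] using this
      have e2 : (o' 0 - q 0) ^ 2 + (o' 1 - q 1) ^ 2 = ρ ^ 2 := by
        have := h2; simpa [norm_sq_eq, PiLp.sub_apply] using this
      constructor
      · simp only [inner_eq, norm_sq_eq, PiLp.sub_apply, Set.mem_setOf_eq]
        linear_combination (e1 - e2) / 2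
      · simp only [inner_eq, norm_sq_eq, PiLp.smul_apply, smul_eq_mul, Set.mem_setOf_eq]
        linear_combination e1
    have hs_eq : s = rfp (o' - o) (‖o'‖ ^ 2 - ‖o‖ ^ 2) q := by
      have hsub : o' - o = (-k) • u := by
        rw [ho'def, rfp_sub u δ o, hkdef]
      have hdelta : ‖o'‖ ^ 2 - ‖o‖ ^ 2 = (-k) * δ := by
        rw [ho'def, rfp_delta u δ hu0 o, hkdef]
      rw [hsub, hdelta, rfp_scale u δ (-k) hu0 (neg_ne_zero.mpr hk0) q]
      have hs1 : s = rfp (s - q) (‖s‖ ^ 2 - ‖q‖ ^ 2) q := (rfp_self q s hsq).symm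
      rw [hs1, hvs, hcs, hudef, hδdef]
      rw [rfp_scale (r - p) (‖r‖ ^ 2 - ‖p‖ ^ 2) κ (sub_ne p r hrp) hκ q]
    have hxy := hT hmem
    simp only [Set.mem_insert_iff, Set.mem_singleton_iff] at hxy
    show s ∈ _
    simp only [Set.mem_insert_iff, Set.mem_singleton_iff]
    rcases hxy with ho'x | ho'y
    · left; rw [hs_eq, ho'x]
    · right; rw [hs_eq, ho'y]
  · -- line case
    subst hCeq
    have hpC : ⟪v, p⟫ ≠ t := hp
    have hqC : ⟪v, q⟫ ≠ t := hq
    set κ : ℝ := (t - ⟪v, q⟫) / (t - ⟪v, p⟫) with hκdef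
    have hκ0 : κ ≠ 0 :=
      div_ne_zero (sub_ne_zero.mpr (Ne.symm hqC)) (sub_ne_zero.mpr (Ne.symm hpC))
    set α : ℝ := κ * (κ - 1) with hαdef
    set z : E2 := (2 * κ) • q - (2 * κ ^ 2) • p with hzdef
    set c : ℝ := 2 * κ ^ 2 * ⟪q - p, q⟫ - κ * (κ - 1) * ‖q‖ ^ 2 with hcdef
    have hquad : ∀ rs : E2 × E2, rs ∈ S → ⟪v, rs.2⟫ = t ∧ α * ‖rs.2‖ ^ 2 + ⟪z, rs.2⟫ = c := by
      rintro ⟨r, s⟩ ⟨hrC, hsC, hb⟩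
      simp only [Set.mem_setOf_eq] at hrC hsC
      have hrp : r ≠ p := by rintro rfl; exact hpC hrC
      have hsq : s ≠ q := by rintro rfl; exact hqC hsC
      obtain ⟨κ', hκ', hvs, hcs⟩ := bisector_prop p r q s hrp hsq hb
      have hκeq : κ' = κ := by
        have hiv : ⟪v, s - q⟫ = κ' * ⟪v, r - p⟫ := by
          rw [hvs, real_inner_smul_right]
        rw [inner_sub_right, inner_sub_right, hrC, hsC] at hiv
        rw [hκdef, eq_comm, div_eq_iff (sub_ne_zero.mpr (Ne.symm hpC))]
        linarith [hiv]
      subst hκeq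
      refine ⟨hsC, ?_⟩
      have e0 : s 0 - q 0 = κ * (r 0 - p 0) := by
        have := congrFun (congrArg WithLp.ofLp hvs) 0; simpa [PiLp.sub_apply, PiLp.smul_apply] using this
      have e1 : s 1 - q 1 = κ * (r 1 - p 1) := by
        have := congrFun (congrArg WithLp.ofLp hvs) 1; simpa [PiLp.sub_apply, PiLp.smul_apply] using this
      have hcs' : s 0 ^ 2 + s 1 ^ 2 - (q 0 ^ 2 + q 1 ^ 2) =
          κ * (r 0 ^ 2 + r 1 ^ 2 - (p 0 ^ 2 + p 1 ^ 2)) := by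
        simpa [norm_sq_eq] using hcs
      simp only [hαdef, hzdef, hcdef, inner_eq, norm_sq_eq, PiLp.sub_apply, PiLp.smul_apply,
        smul_eq_mul]
      linear_combination κ ^ 2 * hcs' - κ * ((s 0 - q 0) + κ * (r 0 + p 0)) * e0 -
        κ * ((s 1 - q 1) + κ * (r 1 + p 1)) * e1
    by_cases hα : α = 0
    · -- κ = 1, two lines
      have hκ1 : κ = 1 := by
        rcases mul_eq_zero.mp (hαdef ▸ hα) with h' | h'
        · exact absurd h' hκ0
        · linarith
      have hz0 : z ≠ 0 := by
        rw [hzdef, hκ1]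
        intro hzz
        apply hpq
        ext i
        have := congrFun (congrArg WithLp.ofLp hzz) i
        simp [PiLp.sub_apply, PiLp.smul_apply] at this
        fin_cases i <;> linarith [this]
      have hy₀ : ⟪z, q⟫ = c := by
        rw [hzdef, hcdef, hκ1]
        simp only [inner_sub_left, real_inner_smul_left, inner_eq, norm_sq_eq, PiLp.sub_apply]
        ring
      obtain ⟨x, hx⟩ := line_line_sub v z hv hz0 t c q hy₀ hqC
      refine ⟨x, x, ?_⟩
      rintro s' ⟨⟨r, s⟩, hrs, rfl⟩
      obtain ⟨h1', h2'⟩ := hquad ⟨r, s⟩ hrs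
      have : s ∈ ({x} : Set E2) := hx ⟨h1', by rw [← h2']; rw [hα]; ring⟩
      simp only [Set.mem_singleton_iff] at this
      simp [this]
    · obtain ⟨x, y, hT⟩ := line_quadric_sub v hv t α hα z c
      refine ⟨x, y, ?_⟩
      rintro s' ⟨⟨r, s⟩, hrs, rfl⟩
      obtain ⟨h1', h2'⟩ := hquad ⟨r, s⟩ hrs
      exact hT ⟨h1', h2'⟩
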